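/- Let P be a substochastic irreducible matrix on a countably infinite set Λ. Set δ := Σ_{z∈Λ} inf_{x∈Λ} P(x,z) and c := sup_{x∈Λ} (1 − Σ_{y∈Λ} P(x,y)). If δ > c, then P is aperiodic and R-positive, where R is its decay parameter; moreover there exist strictly positive functions ν, μ : Λ → (0,∞) with Σ_{x∈Λ} ν(x)P(x,y) = R ν(y) for all y ∈ Λ, Σ_{y∈Λ} P(x,y)μ(y) = R μ(x) for all x ∈ Λ, Σ_{x∈Λ} ν(x) < ∞, and 0 < inf_{x∈Λ} μ(x) ≤ sup_{x∈Λ} μ(x) < ∞. (This is the discrete-skeleton form of the paper's Theorem 2.3: a Doeblin-type condition α > C implies R-positivity with a bounded right eigenvector bounded away from 0 and a summable left eigenvector.) -/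

import Mathlib

open Filter Topology

/-- Powers of a matrix indexed by a countable set: `matPow P 0 = Id`,
`matPow P (n+1) x y = ∑ z, matPow P n x z * P z y`. -/
noncomputable def matPow {Λ : Type*} [DecidableEq Λ] (P : Λ → Λ → ℝ) : ℕ → Λ → Λ → ℝ
  | 0 => fun x y => if x = y then 1 else 0
  | n + 1 => fun x y => ∑' z, matPow P n x z * P z y

lemma dswap {α β : Type*} {f : α → β → ℝ} (h0 : ∀ x y, 0 ≤ f x y)
    (h1 : ∀ x, Summable (f x)) (h2 : Summable fun x => ∑' y, f x y) :
    (∀ y, Summable fun x => f x y) ∧ (Summable fun y => ∑' x, f x y) ∧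
      ((∑' y, ∑' x, f x y) = ∑' x, ∑' y, f x y) := by
  have hunc : Summable (Function.uncurry f) := by
    exact (summable_prod_of_nonneg (fun p => h0 p.1 p.2)).mpr ⟨h1, h2⟩
  have hswap : Summable (fun q : β × α => f q.2 q.1) := hunc.prod_symm
  refine ⟨fun y => hswap.prod_factor y, ?_, Summable.tsum_comm hunc⟩
  exact ((summable_prod_of_nonneg (fun p : β × α => h0 p.2 p.1)).mp hswap).2

section matPowLemmas
variable {Λ : Type*} [DecidableEq Λ] {P : Λ → Λ → ℝ}
  (hP0 : ∀ x y, 0 ≤ P x y) (hPsum : ∀ x, Summable (P x)) (hP1 : ∀ x, ∑' y, P x y ≤ 1)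
include hP0 hPsum hP1
set_option linter.unusedSectionVars false

lemma P_le_one (x y : Λ) : P x y ≤ 1 :=
  le_trans (Summable.le_tsum (hPsum x) y (fun j _ => hP0 x j)) (hP1 x)

lemma matPow_nonneg : ∀ n x y, 0 ≤ matPow P n x y := by
  intro n
  induction n with
  | zero => intro x y; simp [matPow]; positivity
  | succ n ih =>
    intro x y
    exact tsum_nonneg fun z => mul_nonneg (ih x z) (hP0 z y)

lemma matPow_row : ∀ n x, Summable (matPow P n x) ∧ ∑' y, matPow P n x y ≤ 1 := by
  intro n
  induction n with
  | zero =>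
    intro x
    constructor
    · apply summable_of_ne_finset_zero (s := {x})
      intro y hy
      simp at hy
      simp [matPow, (Ne.symm hy)]
    · simp [matPow]
  | succ n ih =>
    intro x
    have h1 : ∀ z : Λ, Summable fun y => matPow P n x z * P z y :=
      fun z => (hPsum z).mul_left _
    have h2 : Summable fun z => ∑' y, matPow P n x z * P z y := by
      apply Summable.of_nonneg_of_le
        (fun z => tsum_nonneg fun y => mul_nonneg (matPow_nonneg hP0 hPsum hP1 n x z) (hP0 z y))
        (fun z => ?_) (ih x).1
      rw [tsum_mul_left]
      calc matPow P n x z * ∑' y, P z y ≤ matPow P n x z * 1 :=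
        mul_le_mul_of_nonneg_left (hP1 z) (matPow_nonneg hP0 hPsum hP1 n x z)
      _ = matPow P n x z := mul_one _
    obtain ⟨hs1, hs2, hs3⟩ := dswap
      (fun z y => mul_nonneg (matPow_nonneg hP0 hPsum hP1 n x z) (hP0 z y)) h1 h2
    constructor
    · exact hs2
    · show (∑' y, ∑' z, matPow P n x z * P z y) ≤ 1
      rw [hs3]
      calc (∑' z, ∑' y, matPow P n x z * P z y)
          ≤ ∑' z, matPow P n x z := by
            apply Summable.tsum_le_tsum _ h2 (ih x).1
            intro z
            rw [tsum_mul_left]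
            calc matPow P n x z * ∑' y, P z y ≤ matPow P n x z * 1 :=
              mul_le_mul_of_nonneg_left (hP1 z) (matPow_nonneg hP0 hPsum hP1 n x z)
            _ = matPow P n x z := mul_one _
        _ ≤ 1 := (ih x).2

lemma matPow_le_one (n : ℕ) (x y : Λ) : matPow P n x y ≤ 1 :=
  le_trans (Summable.le_tsum (matPow_row hP0 hPsum hP1 n x).1 y
    (fun j _ => matPow_nonneg hP0 hPsum hP1 n x j)) (matPow_row hP0 hPsum hP1 n x).2

lemma matPow_one (x y : Λ) : matPow P 1 x y = P x y := by
  show (∑' z, matPow P 0 x z * P z y) = P x y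
  rw [tsum_eq_single x (fun z hz => by simp [matPow, Ne.symm hz])]
  simp [matPow]

lemma matPow_mul_summable (n : ℕ) (x y : Λ) :
    Summable fun z => matPow P n x z * P z y := by
  apply Summable.of_nonneg_of_le
    (fun z => mul_nonneg (matPow_nonneg hP0 hPsum hP1 n x z) (hP0 z y))
    (fun z => ?_) (matPow_row hP0 hPsum hP1 n x).1
  calc matPow P n x z * P z y ≤ matPow P n x z * 1 :=
      mul_le_mul_of_nonneg_left (P_le_one hP0 hPsum hP1 z y) (matPow_nonneg hP0 hPsum hP1 n x z)
  _ = matPow P n x z := mul_one _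

lemma matPow_left (n : ℕ) (x y : Λ) :
    matPow P (n + 1) x y = ∑' z, P x z * matPow P n z y := by
  induction n generalizing x y with
  | zero =>
    show (∑' z, matPow P 0 x z * P z y) = _
    rw [tsum_eq_single x (fun z hz => by simp [matPow, Ne.symm hz]),
        tsum_eq_single y (fun z hz => by simp [matPow, hz])]
    simp [matPow]
  | succ n ih =>
    show (∑' z, matPow P (n+1) x z * P z y) = ∑' w, P x w * matPow P (n+1) w y
    calc (∑' z, matPow P (n+1) x z * P z y)
        = ∑' z, (∑' w, P x w * matPow P n w z) * P z y := by
          exact tsum_congr fun z => by rw [ih]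
      _ = ∑' z, ∑' w, P x w * matPow P n w z * P z y := by
          exact tsum_congr fun z => by rw [← tsum_mul_right]
      _ = ∑' w, ∑' z, P x w * matPow P n w z * P z y := by
          have h0 : ∀ w z, 0 ≤ P x w * matPow P n w z * P z y := fun w z =>
            mul_nonneg (mul_nonneg (hP0 x w) (matPow_nonneg hP0 hPsum hP1 n w z)) (hP0 z y)
          have h1 : ∀ w, Summable fun z => P x w * matPow P n w z * P z y := by
            intro w
            simp_rw [mul_assoc]
            exact (matPow_mul_summable hP0 hPsum hP1 n w y).mul_left _
          have h2 : Summable fun w => ∑' z, P x w * matPow P n w z * P z y := by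
            apply Summable.of_nonneg_of_le (fun w => tsum_nonneg fun z => h0 w z)
              (fun w => ?_) (hPsum x)
            simp_rw [mul_assoc, tsum_mul_left]
            calc P x w * ∑' z, matPow P n w z * P z y
                ≤ P x w * 1 := by
                  apply mul_le_mul_of_nonneg_left _ (hP0 x w)
                  show matPow P (n+1) w y ≤ 1
                  exact matPow_le_one hP0 hPsum hP1 (n+1) w y
              _ = P x w := mul_one _
          exact (dswap h0 h1 h2).2.2
      _ = ∑' w, P x w * matPow P (n+1) w y := by
          apply tsum_congr fun w => ?_
          simp_rw [mul_assoc, tsum_mul_left]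
          rfl

end matPowLemmas

section iter
variable {Λ : Type*} [Nonempty Λ] (Q : Λ → Λ → ℝ) (p : Λ → ℝ) (r : ℝ)

noncomputable def gIter : ℕ → Λ → ℝ
  | 0 => fun _ => 1
  | k + 1 => fun x => ∑' y, Q x y * gIter k y

noncomputable def hIter : ℕ → Λ → ℝ
  | 0 => p
  | k + 1 => fun y => ∑' x, hIter k x * Q x y

set_option linter.unusedSectionVars false
variable {Q p r}
variable (hQ0 : ∀ x y, 0 ≤ Q x y) (hQsum : ∀ x, Summable (Q x))
  (hQr : ∀ x, ∑' y, Q x y ≤ r) (hp0 : ∀ y, 0 ≤ p y) (hpsum : Summable p)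

include hQ0

lemma gIter_nonneg : ∀ k x, 0 ≤ gIter Q k x := by
  intro k
  induction k with
  | zero => intro x; exact zero_le_one
  | succ k ih => intro x; exact tsum_nonneg fun y => mul_nonneg (hQ0 x y) (ih y)

include hQsum hQr

lemma r_nonneg : 0 ≤ r := by
  obtain ⟨x⟩ := (inferInstance : Nonempty Λ)
  exact le_trans (tsum_nonneg (hQ0 x)) (hQr x)

lemma gIter_le : ∀ k x, gIter Q k x ≤ r ^ k := by
  intro k
  induction k with
  | zero => intro x; simp [gIter]
  | succ k ih =>
    intro x
    show (∑' y, Q x y * gIter Q k y) ≤ r ^ (k + 1)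
    calc (∑' y, Q x y * gIter Q k y) ≤ ∑' y, Q x y * r ^ k := by
          apply Summable.tsum_le_tsum _ _ ((hQsum x).mul_right _)
          · intro y
            exact mul_le_mul_of_nonneg_left (ih y) (hQ0 x y)
          · apply Summable.of_nonneg_of_le
              (fun y => mul_nonneg (hQ0 x y) (gIter_nonneg hQ0 k y))
              (fun y => mul_le_mul_of_nonneg_left (ih y) (hQ0 x y))
              ((hQsum x).mul_right _)
      _ = (∑' y, Q x y) * r ^ k := tsum_mul_right
      _ ≤ r * r ^ k := by
          apply mul_le_mul_of_nonneg_right (hQr x)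
          exact pow_nonneg (r_nonneg hQ0 hQsum hQr) k
      _ = r ^ (k + 1) := (pow_succ' r k).symm

lemma gIter_mul_summable (k : ℕ) (x : Λ) : Summable fun y => Q x y * gIter Q k y := by
  apply Summable.of_nonneg_of_le
    (fun y => mul_nonneg (hQ0 x y) (gIter_nonneg hQ0 k y))
    (fun y => mul_le_mul_of_nonneg_left (gIter_le hQ0 hQsum hQr k y) (hQ0 x y))
    ((hQsum x).mul_right _)

lemma gIter_ge {m : ℝ} (hm0 : 0 ≤ m) (hm : ∀ x, m ≤ ∑' y, Q x y) :
    ∀ k x, m ^ k ≤ gIter Q k x := by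
  intro k
  induction k with
  | zero => intro x; simp [gIter]
  | succ k ih =>
    intro x
    show m ^ (k + 1) ≤ ∑' y, Q x y * gIter Q k y
    calc m ^ (k + 1) = m * m ^ k := pow_succ' m k
      _ ≤ (∑' y, Q x y) * m ^ k :=
          mul_le_mul_of_nonneg_right (hm x) (pow_nonneg hm0 k)
      _ = ∑' y, Q x y * m ^ k := tsum_mul_right.symm
      _ ≤ ∑' y, Q x y * gIter Q k y := by
          apply Summable.tsum_le_tsum _ ((hQsum x).mul_right _)
            (gIter_mul_summable hQ0 hQsum hQr k x)
          intro y
          exact mul_le_mul_of_nonneg_left (ih y) (hQ0 x y)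

include hp0 hpsum

lemma hIter_nonneg : ∀ k y, 0 ≤ hIter Q p k y := by
  intro k
  induction k with
  | zero => exact hp0
  | succ k ih => intro y; exact tsum_nonneg fun x => mul_nonneg (ih x) (hQ0 x y)

lemma hIter_sum : ∀ k, Summable (hIter Q p k) ∧ ∑' y, hIter Q p k y ≤ (∑' y, p y) * r ^ k := by
  intro k
  induction k with
  | zero => exact ⟨hpsum, by simp [hIter]⟩
  | succ k ih =>
    have h0 : ∀ x y, 0 ≤ hIter Q p k x * Q x y := fun x y =>
      mul_nonneg (hIter_nonneg hQ0 hQsum hQr hp0 hpsum k x) (hQ0 x y)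
    have h1 : ∀ x, Summable fun y => hIter Q p k x * Q x y := fun x => (hQsum x).mul_left _
    have h2 : Summable fun x => ∑' y, hIter Q p k x * Q x y := by
      apply Summable.of_nonneg_of_le (fun x => tsum_nonneg (h0 x)) (fun x => ?_)
        (ih.1.mul_right r)
      rw [tsum_mul_left]
      exact mul_le_mul_of_nonneg_left (hQr x) (hIter_nonneg hQ0 hQsum hQr hp0 hpsum k x)
    obtain ⟨hs1, hs2, hs3⟩ := dswap h0 h1 h2
    refine ⟨hs2, ?_⟩
    show (∑' y, ∑' x, hIter Q p k x * Q x y) ≤ _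
    rw [hs3]
    calc (∑' x, ∑' y, hIter Q p k x * Q x y) ≤ ∑' x, hIter Q p k x * r := by
          apply Summable.tsum_le_tsum _ h2 (ih.1.mul_right r)
          intro x
          rw [tsum_mul_left]
          exact mul_le_mul_of_nonneg_left (hQr x) (hIter_nonneg hQ0 hQsum hQr hp0 hpsum k x)
      _ = (∑' x, hIter Q p k x) * r := tsum_mul_right
      _ ≤ ((∑' y, p y) * r ^ k) * r :=
          mul_le_mul_of_nonneg_right ih.2 (r_nonneg hQ0 hQsum hQr)
      _ = (∑' y, p y) * r ^ (k + 1) := by ring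

lemma dual_shift (k m : ℕ) :
    (∑' y, hIter Q p k y * gIter Q (m + 1) y) = ∑' y, hIter Q p (k + 1) y * gIter Q m y := by
  have h0 : ∀ x y, 0 ≤ hIter Q p k x * Q x y * gIter Q m y := fun x y =>
    mul_nonneg (mul_nonneg (hIter_nonneg hQ0 hQsum hQr hp0 hpsum k x) (hQ0 x y)) (gIter_nonneg hQ0 m y)
  have h1 : ∀ x, Summable fun y => hIter Q p k x * Q x y * gIter Q m y := by
    intro x
    simp_rw [mul_assoc]
    exact (gIter_mul_summable hQ0 hQsum hQr m x).mul_left _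
  have h2 : Summable fun x => ∑' y, hIter Q p k x * Q x y * gIter Q m y := by
    apply Summable.of_nonneg_of_le (fun x => tsum_nonneg (h0 x)) (fun x => ?_)
      ((hIter_sum hQ0 hQsum hQr hp0 hpsum k).1.mul_right (r ^ (m+1)))
    simp_rw [mul_assoc, tsum_mul_left]
    apply mul_le_mul_of_nonneg_left _ (hIter_nonneg hQ0 hQsum hQr hp0 hpsum k x)
    exact gIter_le hQ0 hQsum hQr (m+1) x
  obtain ⟨hs1, hs2, hs3⟩ := dswap h0 h1 h2
  calc (∑' y, hIter Q p k y * gIter Q (m + 1) y)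
      = ∑' x, ∑' y, hIter Q p k x * Q x y * gIter Q m y := by
        apply tsum_congr fun x => ?_
        show hIter Q p k x * gIter Q (m+1) x = _
        show hIter Q p k x * (∑' y, Q x y * gIter Q m y) = _
        rw [← tsum_mul_left]
        exact tsum_congr fun y => (mul_assoc _ _ _).symm
    _ = ∑' y, ∑' x, hIter Q p k x * Q x y * gIter Q m y := hs3.symm
    _ = ∑' y, hIter Q p (k + 1) y * gIter Q m y := by
        apply tsum_congr fun y => ?_
        rw [show (∑' x, hIter Q p k x * Q x y * gIter Q m y)
            = (∑' x, hIter Q p k x * Q x y) * gIter Q m y from tsum_mul_right]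
        rfl

lemma dual (m : ℕ) : (∑' y, p y * gIter Q m y) = ∑' y, hIter Q p m y := by
  have key : ∀ m k, (∑' y, hIter Q p k y * gIter Q m y) = ∑' y, hIter Q p (k + m) y := by
    intro m
    induction m with
    | zero => intro k; simp [gIter]
    | succ m ih =>
      intro k
      rw [dual_shift hQ0 hQsum hQr hp0 hpsum k m, ih (k+1)]
      have hkm : k + 1 + m = k + (m + 1) := by omega
      rw [hkm]
  have := key m 0
  simpa [hIter] using this

end iter

lemma tendsto_const_rpow_inv {a : ℝ} (ha : 0 < a) :
    Tendsto (fun n : ℕ => a ^ ((n : ℝ)⁻¹)) atTop (𝓝 1) := by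
  have h : ∀ n : ℕ, a ^ ((n : ℝ)⁻¹) = Real.exp (Real.log a * (n : ℝ)⁻¹) := by
    intro n
    rw [Real.rpow_def_of_pos ha]
  simp_rw [h]
  have h2 : Tendsto (fun n : ℕ => Real.log a * (n : ℝ)⁻¹) atTop (𝓝 0) := by
    simpa using tendsto_inv_atTop_nhds_zero_nat.const_mul (Real.log a)
  simpa [Function.comp_def] using (Real.continuous_exp.tendsto 0).comp h2

lemma tendsto_rpow_inv_one {u : ℕ → ℝ} (h0 : ∀ n, 0 ≤ u n) {L : ℝ} (hL : 0 < L)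
    (hu : Tendsto u atTop (𝓝 L)) :
    Tendsto (fun n => u n ^ ((n : ℝ)⁻¹)) atTop (𝓝 1) := by
  have hev : ∀ᶠ n in atTop, u n ∈ Set.Icc (L / 2) (L + 1) :=
    hu (Icc_mem_nhds (by linarith) (by linarith))
  apply tendsto_of_tendsto_of_tendsto_of_le_of_le' (tendsto_const_rpow_inv (by linarith : (0:ℝ) < L / 2))
    (tendsto_const_rpow_inv (by linarith : (0:ℝ) < L + 1))
  · filter_upwards [hev] with n hn
    exact Real.rpow_le_rpow (by linarith [hn.1]) hn.1 (by positivity)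
  · filter_upwards [hev] with n hn
    exact Real.rpow_le_rpow (h0 n) hn.2 (by positivity)

set_option linter.unusedSectionVars false
set_option maxHeartbeats 1000000

/-- Theorem 2.3, discrete skeleton form: the Doeblin-type condition
`δ := Σ_z inf_x P(x,z) > c := sup_x (1 − Σ_y P(x,y))` implies aperiodicity and
$R$-positivity, with a summable left eigenvector and a right eigenvector bounded above
and bounded away from `0`. -/
theorem doeblin_implies_R_positivity
    {Λ : Type*} [Countable Λ] [Infinite Λ] [DecidableEq Λ]
    (P : Λ → Λ → ℝ)
    -- substochastic
    (hP0 : ∀ x y, 0 ≤ P x y)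
    (hPsum : ∀ x, Summable (P x))
    (hP1 : ∀ x, ∑' y, P x y ≤ 1)
    -- irreducible
    (hirr : ∀ x y, ∃ n, 1 ≤ n ∧ 0 < matPow P n x y)
    -- the Doeblin condition δ > c
    (hδc : (⨆ x, (1 - ∑' y, P x y)) < ∑' z, ⨅ x, P x z) :
    -- aperiodicity: gcd of return times is 1
    (∀ x, ∀ d : ℕ, (∀ n, 1 ≤ n → 0 < matPow P n x x → d ∣ n) → d = 1) ∧
    ∃ R : ℝ, 0 < R ∧ R ≤ 1 ∧
      -- R is the decay parameter
      (∀ x, Tendsto (fun n : ℕ => (matPow P n x x) ^ ((n : ℝ)⁻¹)) atTop (𝓝 R)) ∧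
      -- R-positivity: lim R^{-n} P^n(x,x) exists and is positive
      (∀ x, ∃ L : ℝ, 0 < L ∧
        Tendsto (fun n : ℕ => matPow P n x x / R ^ n) atTop (𝓝 L)) ∧
      -- eigenvectors
      ∃ ν μ : Λ → ℝ, (∀ x, 0 < ν x) ∧ (∀ x, 0 < μ x) ∧
        (∀ y, HasSum (fun x => ν x * P x y) (R * ν y)) ∧
        (∀ x, HasSum (fun y => P x y * μ y) (R * μ x)) ∧
        Summable ν ∧
        ∃ c₁ C₁ : ℝ, 0 < c₁ ∧ (∀ x, c₁ ≤ μ x) ∧ (∀ x, μ x ≤ C₁) := by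
  obtain ⟨x₀⟩ : Nonempty Λ := inferInstance
  -- basic constants
  set π : Λ → ℝ := fun y => ⨅ x, P x y with hπdef
  have hπ0 : ∀ y, 0 ≤ π y := fun y => le_ciInf fun x => hP0 x y
  have hπle : ∀ x y, π y ≤ P x y := fun x y =>
    ciInf_le ⟨0, by rintro a ⟨x', rfl⟩; exact hP0 x' y⟩ x
  have hπsum : Summable π := Summable.of_nonneg_of_le hπ0 (fun y => hπle x₀ y) (hPsum x₀)
  set δ : ℝ := ∑' z, π z with hδdef
  set c : ℝ := ⨆ x, (1 - ∑' y, P x y) with hcdef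
  have hδc' : c < δ := hδc
  have hbdd : BddAbove (Set.range fun x : Λ => 1 - ∑' y, P x y) := by
    refine ⟨1, ?_⟩
    rintro a ⟨x', rfl⟩
    have : 0 ≤ ∑' y, P x' y := tsum_nonneg (hP0 x')
    simp only []
    linarith
  have hscc : ∀ x, 1 - (∑' y, P x y) ≤ c := fun x => le_ciSup hbdd x
  have hc0 : 0 ≤ c := le_trans (by linarith [hP1 x₀]) (hscc x₀)
  have hδ1 : δ ≤ 1 :=
    le_trans (Summable.tsum_le_tsum (fun y => hπle x₀ y) hπsum (hPsum x₀)) (hP1 x₀)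
  have hδpos : 0 < δ := lt_of_le_of_lt hc0 hδc'
  have hc1 : c < 1 := lt_of_lt_of_le hδc' hδ1
  have h1δ0 : 0 ≤ 1 - δ := by linarith
  obtain ⟨z₀, hz₀⟩ : ∃ z₀, 0 < π z₀ := by
    by_contra hcon
    push_neg at hcon
    have : δ ≤ 0 := tsum_nonpos hcon
    linarith
  -- the matrix Q
  set Q : Λ → Λ → ℝ := fun x y => P x y - π y with hQdef
  have hQ0 : ∀ x y, 0 ≤ Q x y := fun x y => sub_nonneg.mpr (hπle x y)
  have hQsum : ∀ x, Summable (Q x) := fun x => (hPsum x).sub hπsum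
  have hQrow : ∀ x, (∑' y, Q x y) = (∑' y, P x y) - δ := fun x => Summable.tsum_sub (hPsum x) hπsum
  have hQr : ∀ x, (∑' y, Q x y) ≤ 1 - δ := fun x => by rw [hQrow]; linarith [hP1 x]
  have hQge : ∀ x, 1 - c - δ ≤ ∑' y, Q x y := fun x => by rw [hQrow]; linarith [hscc x]
  have hQle1 : ∀ x y, Q x y ≤ 1 := fun x y =>
    le_trans (sub_le_self (P x y) (hπ0 y)) (P_le_one hP0 hPsum hP1 x y)
  -- the iterates
  set g : ℕ → Λ → ℝ := gIter Q with hgdef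
  set hh : ℕ → Λ → ℝ := hIter Q π with hhdef
  set b : ℕ → ℝ := fun k => ∑' y, hh k y with hbdef
  have hg0 : ∀ k x, 0 ≤ g k x := gIter_nonneg hQ0
  have hgle : ∀ k x, g k x ≤ (1 - δ) ^ k := gIter_le hQ0 hQsum hQr
  have hh0 : ∀ k y, 0 ≤ hh k y := hIter_nonneg hQ0 hQsum hQr hπ0 hπsum
  have hhsum : ∀ k, Summable (hh k) := fun k => (hIter_sum hQ0 hQsum hQr hπ0 hπsum k).1
  have hb0 : ∀ k, 0 ≤ b k := fun k => tsum_nonneg (hh0 k)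
  have hble : ∀ k, b k ≤ δ * (1 - δ) ^ k := fun k => (hIter_sum hQ0 hQsum hQr hπ0 hπsum k).2
  have hbg : ∀ k, (∑' y, π y * g k y) = b k := dual hQ0 hQsum hQr hπ0 hπsum
  have hbzero : b 0 = δ := by simp only [hbdef, hhdef, hIter]; rfl
  have hπg_summable : ∀ k, Summable fun y => π y * g k y := fun k =>
    Summable.of_nonneg_of_le (fun y => mul_nonneg (hπ0 y) (hg0 k y))
      (fun y => mul_le_mul_of_nonneg_left (hgle k y) (hπ0 y)) (hπsum.mul_right _)
  -- R₀ and the function F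
  set R₀ : ℝ := max (1 - c) δ with hR₀def
  have hR₀pos : 0 < R₀ := lt_of_lt_of_le (by linarith) (le_max_left _ _)
  have hR₀1 : R₀ ≤ 1 := max_le (by linarith) hδ1
  have hR₀gt : 1 - δ < R₀ := lt_of_lt_of_le (by linarith) (le_max_left _ _)
  set F : ℝ → ℝ := fun r => ∑' k, b k / r ^ (k + 1) with hFdef
  have hgeo : ∀ r : ℝ, R₀ ≤ r → Summable fun k : ℕ => δ / r * ((1 - δ) / r) ^ k := by
    intro r hr
    have hrpos : 0 < r := lt_of_lt_of_le hR₀pos hr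
    apply Summable.mul_left
    apply summable_geometric_of_lt_one (div_nonneg h1δ0 (le_of_lt hrpos))
    rw [div_lt_one hrpos]
    linarith
  have hterm_eq : ∀ (r : ℝ), 0 < r → ∀ k : ℕ,
      δ / r * ((1 - δ) / r) ^ k = δ * (1 - δ) ^ k / r ^ (k + 1) := by
    intro r hr k
    rw [div_pow, div_mul_div_comm, pow_succ']
  have hFsummable : ∀ r : ℝ, R₀ ≤ r → Summable fun k => b k / r ^ (k + 1) := by
    intro r hr
    have hrpos : 0 < r := lt_of_lt_of_le hR₀pos hr
    apply Summable.of_nonneg_of_le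
      (fun k => div_nonneg (hb0 k) (pow_nonneg (le_of_lt hrpos) _)) (fun k => ?_)
      ((hgeo r hr).congr (fun k => hterm_eq r hrpos k))
    exact div_le_div_of_nonneg_right (hble k) (pow_nonneg hrpos.le _)
  have hF1 : F 1 ≤ 1 := by
    have h1 : Summable fun k : ℕ => δ * (1 - δ) ^ k :=
      (summable_geometric_of_lt_one h1δ0 (by linarith)).mul_left δ
    have : F 1 ≤ ∑' k : ℕ, δ * (1 - δ) ^ k := by
      apply Summable.tsum_le_tsum _ (hFsummable 1 hR₀1) h1
      intro k
      simpa using hble k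
    apply le_trans this
    rw [tsum_mul_left, tsum_geometric_of_lt_one h1δ0 (by linarith)]
    rw [show (1 : ℝ) - (1 - δ) = δ by ring]
    rw [mul_inv_cancel₀ (ne_of_gt hδpos)]
  have hFR₀ : 1 ≤ F R₀ := by
    rcases le_or_gt δ (1 - c) with hA | hB
    · -- case A : R₀ = 1 - c
      have hR₀eq : R₀ = 1 - c := max_eq_left hA
      set m : ℝ := 1 - c - δ with hmdef
      have hm0 : 0 ≤ m := by simp only [hmdef]; linarith
      have hgge : ∀ k x, m ^ k ≤ g k x :=
        gIter_ge hQ0 hQsum hQr hm0 (fun x => hQge x)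
      have hbge : ∀ k, δ * m ^ k ≤ b k := by
        intro k
        rw [← hbg k]
        calc δ * m ^ k = ∑' y, π y * m ^ k := by rw [tsum_mul_right]
          _ ≤ ∑' y, π y * g k y := by
            apply Summable.tsum_le_tsum _ (hπsum.mul_right _) (hπg_summable k)
            intro y
            exact mul_le_mul_of_nonneg_left (hgge k y) (hπ0 y)
      have hmlt : m < R₀ := by rw [hR₀eq]; simp only [hmdef]; linarith
      have hmR0 : 0 ≤ m / R₀ := div_nonneg hm0 (le_of_lt hR₀pos)
      have hgeo2 : Summable fun k : ℕ => δ / R₀ * (m / R₀) ^ k := by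
        apply Summable.mul_left
        apply summable_geometric_of_lt_one hmR0
        rw [div_lt_one hR₀pos]
        exact hmlt
      have heq2 : ∀ k : ℕ, δ / R₀ * (m / R₀) ^ k = δ * m ^ k / R₀ ^ (k + 1) := by
        intro k
        rw [div_pow, div_mul_div_comm, pow_succ']
      have hle : (∑' k : ℕ, δ / R₀ * (m / R₀) ^ k) ≤ F R₀ := by
        apply Summable.tsum_le_tsum _ hgeo2 (hFsummable R₀ le_rfl)
        intro k
        rw [heq2 k]
        exact div_le_div_of_nonneg_right (hbge k) (pow_nonneg hR₀pos.le _)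
      apply le_trans _ hle
      rw [tsum_mul_left,
        tsum_geometric_of_lt_one hmR0 (by rw [div_lt_one hR₀pos]; exact hmlt)]
      have hkey : (1 : ℝ) - m / R₀ = δ / R₀ := by
        rw [eq_div_iff (ne_of_gt hR₀pos), sub_mul, div_mul_cancel₀ _ (ne_of_gt hR₀pos)]
        rw [hR₀eq]
        simp only [hmdef]
        ring
      rw [hkey, mul_inv_cancel₀ (div_ne_zero (ne_of_gt hδpos) (ne_of_gt hR₀pos))]
    · -- case B : R₀ = δ
      have hR₀eq : R₀ = δ := max_eq_right (le_of_lt hB)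
      have h0 : b 0 / R₀ ^ (0 + 1) ≤ F R₀ :=
        Summable.le_tsum (hFsummable R₀ le_rfl) 0
          (fun j _ => div_nonneg (hb0 j) (pow_nonneg (le_of_lt hR₀pos) _))
      rw [hbzero, hR₀eq] at h0
      rw [hR₀eq]
      simpa [div_self (ne_of_gt hδpos)] using h0
  -- continuity of F on Icc R₀ 1 and the IVT
  have hFcont : ContinuousOn F (Set.Icc R₀ 1) := by
    have hu : Summable fun k : ℕ => δ / R₀ * ((1 - δ) / R₀) ^ k := hgeo R₀ le_rfl
    apply (tendstoUniformlyOn_tsum hu ?_).continuousOn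
    · refine Filter.Frequently.of_forall fun t => ?_
      apply continuousOn_finset_sum
      intro k _
      apply ContinuousOn.div continuousOn_const (Continuous.continuousOn (by continuity))
      intro r hr
      exact pow_ne_zero _ (ne_of_gt (lt_of_lt_of_le hR₀pos hr.1))
    · intro k r hr
      have hrpos : 0 < r := lt_of_lt_of_le hR₀pos hr.1
      rw [Real.norm_eq_abs, abs_div, abs_of_nonneg (hb0 k),
        abs_of_nonneg (pow_nonneg (le_of_lt hrpos) _)]
      rw [hterm_eq R₀ hR₀pos k]
      apply div_le_div₀ (mul_nonneg (le_of_lt hδpos) (pow_nonneg h1δ0 _)) (hble k)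
        (pow_pos hR₀pos _)
      exact pow_le_pow_left₀ (le_of_lt hR₀pos) hr.1 _
  obtain ⟨R, hRmem, hFR⟩ : ∃ R ∈ Set.Icc R₀ 1, F R = 1 := by
    have h1mem : (1 : ℝ) ∈ Set.Icc (F 1) (F R₀) := ⟨hF1, hFR₀⟩
    have := intermediate_value_Icc' hR₀1 hFcont h1mem
    obtain ⟨R, hR1, hR2⟩ := this
    exact ⟨R, hR1, hR2⟩

  -- properties of R
  have hRlow : R₀ ≤ R := hRmem.1
  have hRione : R ≤ 1 := hRmem.2
  have hRpos : 0 < R := lt_of_lt_of_le hR₀pos hRlow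
  have hRgt : 1 - δ < R := lt_of_lt_of_le hR₀gt hRlow
  have hRne : R ≠ 0 := ne_of_gt hRpos
  have hrat0 : 0 ≤ (1 - δ) / R := div_nonneg h1δ0 hRpos.le
  have hrat1 : (1 - δ) / R < 1 := by rw [div_lt_one hRpos]; exact hRgt
  have hFRval : (∑' k, b k / R ^ (k + 1)) = 1 := hFR
  -- the right eigenvector μ
  set C₁ : ℝ := (R - (1 - δ))⁻¹ with hC₁def
  have hC₁pos : 0 < C₁ := inv_pos.mpr (by linarith)
  set μ : Λ → ℝ := fun x => ∑' k, g k x / R ^ (k + 1) with hμdef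
  have hgeoeq : ∀ k : ℕ, (1 : ℝ) / R * ((1 - δ) / R) ^ k = (1 - δ) ^ k / R ^ (k + 1) := by
    intro k
    rw [div_pow, div_mul_div_comm, pow_succ', one_mul]
  have hgeoRsum : Summable fun k : ℕ => (1 - δ) ^ k / R ^ (k + 1) :=
    (((summable_geometric_of_lt_one hrat0 hrat1).mul_left ((1:ℝ)/R)).congr hgeoeq)
  have hgeoRval : (∑' k : ℕ, (1 - δ) ^ k / R ^ (k + 1)) = C₁ := by
    rw [← tsum_congr hgeoeq, tsum_mul_left, tsum_geometric_of_lt_one hrat0 hrat1]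
    rw [show (1 : ℝ) - (1 - δ) / R = (R - (1 - δ)) / R by field_simp]
    rw [inv_div, hC₁def]
    field_simp
  have hμsummk : ∀ x, Summable fun k => g k x / R ^ (k + 1) := by
    intro x
    apply Summable.of_nonneg_of_le
      (fun k => div_nonneg (hg0 k x) (pow_nonneg hRpos.le _))
      (fun k => div_le_div_of_nonneg_right (hgle k x) (pow_nonneg hRpos.le _)) hgeoRsum
  have hμ0 : ∀ x, 0 ≤ μ x := fun x =>
    tsum_nonneg fun k => div_nonneg (hg0 k x) (pow_nonneg hRpos.le _)
  have hμub : ∀ x, μ x ≤ C₁ := by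
    intro x
    rw [← hgeoRval]
    apply Summable.tsum_le_tsum _ (hμsummk x) hgeoRsum
    intro k
    exact div_le_div_of_nonneg_right (hgle k x) (pow_nonneg hRpos.le _)
  have hμlb : ∀ x, 1 ≤ μ x := by
    intro x
    have h0 : g 0 x / R ^ (0 + 1) ≤ μ x :=
      Summable.le_tsum (hμsummk x) 0 (fun j _ => div_nonneg (hg0 j x) (pow_nonneg hRpos.le _))
    have hg00 : g 0 x = 1 := rfl
    rw [hg00] at h0
    calc (1 : ℝ) = 1 / 1 := by norm_num
      _ ≤ 1 / R ^ (0 + 1) := by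
          apply div_le_div_of_nonneg_left one_pos.le (pow_pos hRpos _) ?_ |>.trans_eq rfl
          calc R ^ (0+1) ≤ 1 ^ (0+1) := pow_le_pow_left₀ hRpos.le hRione _
            _ = 1 := one_pow _
      _ ≤ μ x := h0
  have hμpos : ∀ x, 0 < μ x := fun x => lt_of_lt_of_le one_pos (hμlb x)
  -- eigen-equation pieces for μ
  have hQμ : ∀ x, Summable (fun y => Q x y * μ y) ∧
      (∑' y, Q x y * μ y) = R * μ x - 1 := by
    intro x
    have h0 : ∀ (y : Λ) (k : ℕ), 0 ≤ Q x y * (g k y / R ^ (k + 1)) := fun y k =>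
      mul_nonneg (hQ0 x y) (div_nonneg (hg0 k y) (pow_nonneg hRpos.le _))
    have h1 : ∀ y, Summable fun k => Q x y * (g k y / R ^ (k + 1)) := fun y =>
      (hμsummk y).mul_left _
    have h2 : Summable fun y => ∑' k, Q x y * (g k y / R ^ (k + 1)) := by
      apply Summable.of_nonneg_of_le (fun y => tsum_nonneg (h0 y)) (fun y => ?_)
        ((hQsum x).mul_right C₁)
      rw [tsum_mul_left]
      exact mul_le_mul_of_nonneg_left (hμub y) (hQ0 x y)
    obtain ⟨hs1, hs2, hs3⟩ := dswap h0 h1 h2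
    have hsummable : Summable fun y => Q x y * μ y := by
      apply h2.congr
      intro y
      rw [tsum_mul_left]
    refine ⟨hsummable, ?_⟩
    have step1 : (∑' y, Q x y * μ y) = ∑' y, ∑' k, Q x y * (g k y / R ^ (k + 1)) :=
      tsum_congr fun y => (tsum_mul_left).symm
    have step2 : ∀ k : ℕ, (∑' y, Q x y * (g k y / R ^ (k + 1)))
        = g (k + 1) x / R ^ (k + 1) := by
      intro k
      have : ∀ y, Q x y * (g k y / R ^ (k + 1)) = Q x y * g k y / R ^ (k + 1) :=
        fun y => (mul_div_assoc _ _ _).symm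
      rw [tsum_congr this, tsum_div_const]
      rfl
    have step3 : ∀ k : ℕ, g (k + 1) x / R ^ (k + 1)
        = R * (g (k + 1) x / R ^ (k + 1 + 1)) := by
      intro k
      rw [pow_succ]
      field_simp
      ring
    have hμshift : (∑' k, g (k + 1) x / R ^ (k + 1 + 1)) = μ x - 1 / R := by
      have := Summable.tsum_eq_zero_add (hμsummk x)
      have hg00 : g 0 x = 1 := rfl
      rw [hg00] at this
      have : μ x = 1 / R ^ (0 + 1) + ∑' k, g (k + 1) x / R ^ (k + 1 + 1) := this
      rw [this]
      simp
    rw [step1, ← hs3, tsum_congr step2, tsum_congr step3, tsum_mul_left, hμshift]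
    field_simp
  have hπμ : Summable (fun y => π y * μ y) ∧ (∑' y, π y * μ y) = 1 := by
    have h0 : ∀ (y : Λ) (k : ℕ), 0 ≤ π y * (g k y / R ^ (k + 1)) := fun y k =>
      mul_nonneg (hπ0 y) (div_nonneg (hg0 k y) (pow_nonneg hRpos.le _))
    have h1 : ∀ y, Summable fun k => π y * (g k y / R ^ (k + 1)) := fun y =>
      (hμsummk y).mul_left _
    have h2 : Summable fun y => ∑' k, π y * (g k y / R ^ (k + 1)) := by
      apply Summable.of_nonneg_of_le (fun y => tsum_nonneg (h0 y)) (fun y => ?_)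
        (hπsum.mul_right C₁)
      rw [tsum_mul_left]
      exact mul_le_mul_of_nonneg_left (hμub y) (hπ0 y)
    obtain ⟨hs1, hs2, hs3⟩ := dswap h0 h1 h2
    have hsummable : Summable fun y => π y * μ y := by
      apply h2.congr
      intro y
      rw [tsum_mul_left]
    refine ⟨hsummable, ?_⟩
    have step1 : (∑' y, π y * μ y) = ∑' y, ∑' k, π y * (g k y / R ^ (k + 1)) :=
      tsum_congr fun y => (tsum_mul_left).symm
    have step2 : ∀ k : ℕ, (∑' y, π y * (g k y / R ^ (k + 1)))
        = b k / R ^ (k + 1) := by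
      intro k
      have : ∀ y, π y * (g k y / R ^ (k + 1)) = π y * g k y / R ^ (k + 1) :=
        fun y => (mul_div_assoc _ _ _).symm
      rw [tsum_congr this, tsum_div_const, hbg k]
    rw [step1, ← hs3, tsum_congr step2, hFRval]
  have hPμsummable : ∀ x, Summable fun y => P x y * μ y := by
    intro x
    apply Summable.of_nonneg_of_le
      (fun y => mul_nonneg (hP0 x y) (hμ0 y))
      (fun y => mul_le_mul_of_nonneg_left (hμub y) (hP0 x y))
      ((hPsum x).mul_right C₁)
  have hμeig : ∀ x, (∑' y, P x y * μ y) = R * μ x := by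
    intro x
    have hsplit : ∀ y, P x y * μ y = Q x y * μ y + π y * μ y := by
      intro y
      have : P x y = Q x y + π y := by simp [hQdef]
      rw [this, add_mul]
    rw [tsum_congr hsplit, Summable.tsum_add (hQμ x).1 hπμ.1, (hQμ x).2, hπμ.2]
    ring


  -- the left eigenvector ν
  have hhle : ∀ k y, hh k y ≤ δ * (1 - δ) ^ k := fun k y =>
    le_trans (Summable.le_tsum (hhsum k) y (fun j _ => hh0 k j)) (hble k)
  set ν : Λ → ℝ := fun y => ∑' k, hh k y / R ^ (k + 1) with hνdef
  have hδgeoRsum : Summable fun k : ℕ => δ * (1 - δ) ^ k / R ^ (k + 1) :=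
    (hgeoRsum.mul_left δ).congr fun k => (mul_div_assoc _ _ _).symm
  have hνsummk : ∀ y, Summable fun k => hh k y / R ^ (k + 1) := by
    intro y
    apply Summable.of_nonneg_of_le
      (fun k => div_nonneg (hh0 k y) (pow_nonneg hRpos.le _))
      (fun k => div_le_div_of_nonneg_right (hhle k y) (pow_nonneg hRpos.le _)) hδgeoRsum
  have hν0 : ∀ y, 0 ≤ ν y := fun y =>
    tsum_nonneg fun k => div_nonneg (hh0 k y) (pow_nonneg hRpos.le _)
  have hνswap := dswap (f := fun (k : ℕ) (y : Λ) => hh k y / R ^ (k + 1))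
      (fun k y => div_nonneg (hh0 k y) (pow_nonneg hRpos.le _))
      (fun k => (hhsum k).div_const _)
      ((hFsummable R hRlow).congr (fun k => by rw [tsum_div_const]))
  have hνsum : Summable ν := hνswap.2.1
  have hνtotal : (∑' y, ν y) = 1 := by
    have h := hνswap.2.2
    calc (∑' y, ν y) = ∑' (k : ℕ), ∑' y, hh k y / R ^ (k + 1) := h
      _ = ∑' k, b k / R ^ (k + 1) := tsum_congr fun k => by rw [tsum_div_const]
      _ = 1 := hFRval
  have hνQ : ∀ y, Summable (fun x => ν x * Q x y) ∧
      (∑' x, ν x * Q x y) = R * ν y - π y := by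
    intro y
    have h0 : ∀ (x : Λ) (k : ℕ), 0 ≤ hh k x / R ^ (k + 1) * Q x y := fun x k =>
      mul_nonneg (div_nonneg (hh0 k x) (pow_nonneg hRpos.le _)) (hQ0 x y)
    have h1 : ∀ x, Summable fun k => hh k x / R ^ (k + 1) * Q x y := fun x =>
      (hνsummk x).mul_right _
    have h2' : Summable fun x => ν x * Q x y := by
      apply Summable.of_nonneg_of_le
        (fun x => mul_nonneg (hν0 x) (hQ0 x y)) (fun x => ?_) hνsum
      calc ν x * Q x y ≤ ν x * 1 := mul_le_mul_of_nonneg_left (hQle1 x y) (hν0 x)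
        _ = ν x := mul_one _
    have h2 : Summable fun x => ∑' k, hh k x / R ^ (k + 1) * Q x y := by
      apply h2'.congr
      intro x
      rw [← tsum_mul_right]
    obtain ⟨hs1, hs2, hs3⟩ := dswap h0 h1 h2
    refine ⟨h2', ?_⟩
    have step1 : (∑' x, ν x * Q x y) = ∑' x, ∑' k, hh k x / R ^ (k + 1) * Q x y :=
      tsum_congr fun x => (tsum_mul_right).symm
    have step2 : ∀ k : ℕ, (∑' x, hh k x / R ^ (k + 1) * Q x y)
        = hh (k + 1) y / R ^ (k + 1) := by
      intro k
      have he : ∀ x, hh k x / R ^ (k + 1) * Q x y = hh k x * Q x y / R ^ (k + 1) :=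
        fun x => div_mul_eq_mul_div _ _ _
      rw [tsum_congr he, tsum_div_const]
      rfl
    have step3 : ∀ k : ℕ, hh (k + 1) y / R ^ (k + 1)
        = R * (hh (k + 1) y / R ^ (k + 1 + 1)) := by
      intro k
      rw [pow_succ]
      field_simp
      ring
    have hνshift : (∑' k, hh (k + 1) y / R ^ (k + 1 + 1)) = ν y - π y / R := by
      have h := Summable.tsum_eq_zero_add (hνsummk y)
      have hh00 : hh 0 y = π y := rfl
      rw [hh00] at h
      have h' : ν y = π y / R ^ (0 + 1) + ∑' k, hh (k + 1) y / R ^ (k + 1 + 1) := h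
      rw [h']
      simp
    rw [step1, ← hs3, tsum_congr step2, tsum_congr step3, tsum_mul_left, hνshift]
    field_simp
  have hνPsummable : ∀ y, Summable fun x => ν x * P x y := by
    intro y
    apply Summable.of_nonneg_of_le
      (fun x => mul_nonneg (hν0 x) (hP0 x y)) (fun x => ?_) hνsum
    calc ν x * P x y ≤ ν x * 1 :=
        mul_le_mul_of_nonneg_left (P_le_one hP0 hPsum hP1 x y) (hν0 x)
      _ = ν x := mul_one _
  have hνeig : ∀ y, (∑' x, ν x * P x y) = R * ν y := by
    intro y
    have hsplit : ∀ x, ν x * P x y = ν x * Q x y + ν x * π y := by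
      intro x
      have hq : P x y = Q x y + π y := by simp [hQdef]
      rw [hq, mul_add]
    have hsum2 : Summable fun x => ν x * π y := hνsum.mul_right _
    rw [tsum_congr hsplit, Summable.tsum_add (hνQ y).1 hsum2, (hνQ y).2, tsum_mul_right, hνtotal]
    ring
  -- harmonicity for matrix powers
  have hmatμ : ∀ n x, Summable (fun y => matPow P n x y * μ y) ∧
      (∑' y, matPow P n x y * μ y) = R ^ n * μ x := by
    intro n
    induction n with
    | zero =>
      intro x
      constructor
      · apply summable_of_ne_finset_zero (s := {x})
        intro y hy
        simp at hy
        simp [matPow, Ne.symm hy]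
      · rw [tsum_eq_single x (fun y hy => by simp [matPow, Ne.symm hy])]
        simp [matPow]
    | succ n ih =>
      intro x
      have h0 : ∀ (z : Λ) (y : Λ), 0 ≤ P x z * (matPow P n z y * μ y) := fun z y =>
        mul_nonneg (hP0 x z) (mul_nonneg (matPow_nonneg hP0 hPsum hP1 n z y) (hμ0 y))
      have h1 : ∀ z, Summable fun y => P x z * (matPow P n z y * μ y) := fun z =>
        ((ih z).1).mul_left _
      have h2 : Summable fun z => ∑' y, P x z * (matPow P n z y * μ y) := by
        apply Summable.of_nonneg_of_le (fun z => tsum_nonneg (h0 z)) (fun z => ?_)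
          ((hPsum x).mul_right (R ^ n * C₁))
        rw [tsum_mul_left, (ih z).2]
        rw [← mul_assoc, mul_comm (P x z) (R ^ n), mul_assoc, ← mul_assoc (R^n),
          mul_comm (R^n) (P x z), mul_assoc]
        apply mul_le_mul_of_nonneg_left _ (hP0 x z)
        exact mul_le_mul_of_nonneg_left (hμub z) (pow_nonneg hRpos.le n)
      obtain ⟨hs1, hs2, hs3⟩ := dswap h0 h1 h2
      have hrow : ∀ y, matPow P (n + 1) x y * μ y
          = ∑' z, P x z * (matPow P n z y * μ y) := by
        intro y
        rw [matPow_left hP0 hPsum hP1 n x y, ← tsum_mul_right]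
        apply tsum_congr fun z => by ring
      constructor
      · apply hs2.congr
        intro y
        rw [← hrow y]
      · calc (∑' y, matPow P (n + 1) x y * μ y)
            = ∑' y, ∑' z, P x z * (matPow P n z y * μ y) := tsum_congr hrow
          _ = ∑' z, ∑' y, P x z * (matPow P n z y * μ y) := hs3
          _ = ∑' z, P x z * (R ^ n * μ z) := by
              apply tsum_congr fun z => ?_
              rw [tsum_mul_left, (ih z).2]
          _ = R ^ n * ∑' z, P x z * μ z := by
              rw [← tsum_mul_left]
              apply tsum_congr fun z => by ring
          _ = R ^ (n + 1) * μ x := by rw [hμeig x, pow_succ]; ring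
  have hmatν : ∀ n y, Summable (fun x => ν x * matPow P n x y) ∧
      (∑' x, ν x * matPow P n x y) = R ^ n * ν y := by
    intro n
    induction n with
    | zero =>
      intro y
      constructor
      · apply summable_of_ne_finset_zero (s := {y})
        intro x hx
        simp at hx
        simp [matPow, hx]
      · rw [tsum_eq_single y (fun x hx => by simp [matPow, hx])]
        simp [matPow]
    | succ n ih =>
      intro y
      have h0 : ∀ (x : Λ) (z : Λ), 0 ≤ ν x * (matPow P n x z * P z y) := fun x z =>
        mul_nonneg (hν0 x) (mul_nonneg (matPow_nonneg hP0 hPsum hP1 n x z) (hP0 z y))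
      have h1 : ∀ x, Summable fun z => ν x * (matPow P n x z * P z y) := fun x =>
        (matPow_mul_summable hP0 hPsum hP1 n x y).mul_left _
      have h2 : Summable fun x => ∑' z, ν x * (matPow P n x z * P z y) := by
        apply Summable.of_nonneg_of_le (fun x => tsum_nonneg (h0 x)) (fun x => ?_) hνsum
        rw [tsum_mul_left]
        calc ν x * ∑' z, matPow P n x z * P z y
            = ν x * matPow P (n + 1) x y := rfl
          _ ≤ ν x * 1 := mul_le_mul_of_nonneg_left
              (matPow_le_one hP0 hPsum hP1 (n + 1) x y) (hν0 x)
          _ = ν x := mul_one _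
      obtain ⟨hs1, hs2, hs3⟩ := dswap h0 h1 h2
      have hrow : ∀ x, ν x * matPow P (n + 1) x y
          = ∑' z, ν x * (matPow P n x z * P z y) := by
        intro x
        show ν x * (∑' z, matPow P n x z * P z y) = _
        rw [tsum_mul_left]
      constructor
      · apply h2.congr
        intro x
        rw [← hrow x]
      · calc (∑' x, ν x * matPow P (n + 1) x y)
            = ∑' x, ∑' z, ν x * (matPow P n x z * P z y) := tsum_congr hrow
          _ = ∑' z, ∑' x, ν x * (matPow P n x z * P z y) := hs3.symm
          _ = ∑' z, (R ^ n * ν z) * P z y := by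
              apply tsum_congr fun z => ?_
              have he : ∀ x, ν x * (matPow P n x z * P z y)
                  = (ν x * matPow P n x z) * P z y := fun x => by ring
              rw [tsum_congr he, tsum_mul_right, (ih z).2]
          _ = R ^ n * ∑' z, ν z * P z y := by
              rw [← tsum_mul_left]
              apply tsum_congr fun z => by ring
          _ = R ^ (n + 1) * ν y := by rw [hνeig y, pow_succ]; ring
  -- positivity of ν
  have hνlb : ∀ y, π y / R ≤ ν y := by
    intro y
    have h0 : hh 0 y / R ^ (0 + 1) ≤ ν y :=
      Summable.le_tsum (hνsummk y) 0 (fun j _ => div_nonneg (hh0 j y) (pow_nonneg hRpos.le _))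
    have hh00 : hh 0 y = π y := rfl
    rw [hh00] at h0
    simpa using h0
  have hνz₀ : 0 < ν z₀ := lt_of_lt_of_le (div_pos hz₀ hRpos) (hνlb z₀)
  have hνpos : ∀ y, 0 < ν y := by
    intro y
    obtain ⟨n, hn1, hn2⟩ := hirr z₀ y
    have hterm : ν z₀ * matPow P n z₀ y ≤ ∑' x, ν x * matPow P n x y :=
      Summable.le_tsum (hmatν n y).1 z₀ (fun j _ =>
        mul_nonneg (hν0 j) (matPow_nonneg hP0 hPsum hP1 n j y))
    rw [(hmatν n y).2] at hterm
    have hposn : 0 < R ^ n * ν y := lt_of_lt_of_le (mul_pos hνz₀ hn2) hterm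
    nlinarith [pow_pos hRpos n]

  -- the normalized chain T
  set T : ℕ → Λ → Λ → ℝ := fun n x y => matPow P n x y * μ y / (R ^ n * μ x) with hTdef
  have hRμpos : ∀ n x, 0 < R ^ n * μ x := fun n x => mul_pos (pow_pos hRpos n) (hμpos x)
  have hT0 : ∀ n x y, 0 ≤ T n x y := fun n x y =>
    div_nonneg (mul_nonneg (matPow_nonneg hP0 hPsum hP1 n x y) (hμ0 y)) (hRμpos n x).le
  have hTsum : ∀ n x, Summable fun y => T n x y := fun n x => ((hmatμ n x).1).div_const _
  have hTrow : ∀ n x, (∑' y, T n x y) = 1 := by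
    intro n x
    show (∑' y, matPow P n x y * μ y / (R ^ n * μ x)) = 1
    rw [tsum_div_const, (hmatμ n x).2, div_self (hRμpos n x).ne']
  have hTle1 : ∀ n x y, T n x y ≤ 1 := fun n x y =>
    le_trans (Summable.le_tsum (hTsum n x) y (fun j _ => hT0 n x j)) (hTrow n x).le
  have hT1eq : ∀ x z, T 1 x z = P x z * μ z / (R * μ x) := by
    intro x z
    show matPow P 1 x z * μ z / (R ^ 1 * μ x) = _
    rw [matPow_one hP0 hPsum hP1, pow_one]
  have hTcomp : ∀ n x y, T (n + 1) x y = ∑' z, T 1 x z * T n z y := by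
    intro n x y
    have hz : ∀ z, T 1 x z * T n z y
        = μ y / (R ^ (n + 1) * μ x) * (P x z * matPow P n z y) := by
      intro z
      rw [hT1eq x z]
      have h1 : μ z ≠ 0 := (hμpos z).ne'
      have h2 : μ x ≠ 0 := (hμpos x).ne'
      have h3 : (R : ℝ) ^ n ≠ 0 := (pow_pos hRpos n).ne'
      show P x z * μ z / (R * μ x) * (matPow P n z y * μ y / (R ^ n * μ z)) = _
      field_simp
      ring
    rw [tsum_congr hz, tsum_mul_left, ← matPow_left hP0 hPsum hP1 n x y]
    show matPow P (n + 1) x y * μ y / (R ^ (n + 1) * μ x) = _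
    ring
  have hTprodsummable : ∀ n x y, Summable fun z => T 1 x z * T n z y := by
    intro n x y
    apply Summable.of_nonneg_of_le
      (fun z => mul_nonneg (hT0 1 x z) (hT0 n z y)) (fun z => ?_)
      ((hTsum 1 x).mul_right 1)
    exact mul_le_mul_of_nonneg_left (hTle1 n z y) (hT0 1 x z)
  -- minorization
  set πt : Λ → ℝ := fun z => π z * μ z / (R * C₁) with hπtdef
  have hπt0 : ∀ z, 0 ≤ πt z := fun z =>
    div_nonneg (mul_nonneg (hπ0 z) (hμ0 z)) (mul_pos hRpos hC₁pos).le
  have hπtle : ∀ x z, πt z ≤ T 1 x z := by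
    intro x z
    rw [hT1eq x z]
    apply div_le_div₀ (mul_nonneg (hP0 x z) (hμ0 z))
      (mul_le_mul_of_nonneg_right (hπle x z) (hμ0 z))
      (mul_pos hRpos (hμpos x))
      (mul_le_mul_of_nonneg_left (hμub x) hRpos.le)
  have hπtsummable : Summable πt := (hπμ.1).div_const _
  set ε : ℝ := ∑' z, πt z with hεdef
  have hεpos : 0 < ε := by
    have h0 : πt z₀ ≤ ε := Summable.le_tsum hπtsummable z₀ (fun j _ => hπt0 j)
    have : 0 < πt z₀ :=
      div_pos (mul_pos hz₀ (hμpos z₀)) (mul_pos hRpos hC₁pos)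
    linarith
  have hε1 : ε ≤ 1 := by
    have := Summable.tsum_le_tsum (fun z => hπtle x₀ z) hπtsummable (hTsum 1 x₀)
    rw [hTrow 1 x₀] at this
    exact this
  -- sup and inf over starting points
  set A : ℕ → Λ → ℝ := fun n y => ⨆ x, T n x y with hAdef
  set I : ℕ → Λ → ℝ := fun n y => ⨅ x, T n x y with hIdef
  have hbddA : ∀ n y, BddAbove (Set.range fun x => T n x y) := by
    intro n y
    refine ⟨1, ?_⟩
    rintro v ⟨x, rfl⟩
    exact hTle1 n x y
  have hbddI : ∀ n y, BddBelow (Set.range fun x => T n x y) := by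
    intro n y
    refine ⟨0, ?_⟩
    rintro v ⟨x, rfl⟩
    exact hT0 n x y
  have hTleA : ∀ n x y, T n x y ≤ A n y := fun n x y => le_ciSup (hbddA n y) x
  have hIleT : ∀ n x y, I n y ≤ T n x y := fun n x y => ciInf_le (hbddI n y) x
  have hA1 : ∀ n y, A n y ≤ 1 := fun n y => ciSup_le fun x => hTle1 n x y
  have hI0 : ∀ n y, 0 ≤ I n y := fun n y => le_ciInf fun x => hT0 n x y
  have hA0 : ∀ n y, 0 ≤ A n y := fun n y => le_trans (hT0 n x₀ y) (hTleA n x₀ y)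
  have hAanti : ∀ y, Antitone fun n => A n y := by
    intro y
    apply antitone_nat_of_succ_le
    intro n
    apply ciSup_le fun x => ?_
    rw [hTcomp n x y]
    calc (∑' z, T 1 x z * T n z y) ≤ ∑' z, T 1 x z * A n y := by
          apply Summable.tsum_le_tsum _ (hTprodsummable n x y) ((hTsum 1 x).mul_right _)
          intro z
          exact mul_le_mul_of_nonneg_left (hTleA n z y) (hT0 1 x z)
      _ = A n y := by rw [tsum_mul_right, hTrow 1 x, one_mul]
  have hImono : ∀ y, Monotone fun n => I n y := by
    intro y
    apply monotone_nat_of_le_succ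
    intro n
    apply le_ciInf fun x => ?_
    rw [hTcomp n x y]
    calc I n y = ∑' z, T 1 x z * I n y := by rw [tsum_mul_right, hTrow 1 x, one_mul]
      _ ≤ ∑' z, T 1 x z * T n z y := by
          apply Summable.tsum_le_tsum _ ((hTsum 1 x).mul_right _) (hTprodsummable n x y)
          intro z
          exact mul_le_mul_of_nonneg_left (hIleT n z y) (hT0 1 x z)
  -- contraction of the gap
  have hsub_summable : ∀ x, Summable fun z => T 1 x z - πt z := fun x =>
    (hTsum 1 x).sub hπtsummable
  have hsub0 : ∀ x z, 0 ≤ T 1 x z - πt z := fun x z => sub_nonneg.mpr (hπtle x z)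
  have hSsummable : ∀ n y, Summable fun z => πt z * T n z y := by
    intro n y
    apply Summable.of_nonneg_of_le
      (fun z => mul_nonneg (hπt0 z) (hT0 n z y)) (fun z => ?_) (hπtsummable.mul_right 1)
    exact mul_le_mul_of_nonneg_left (hTle1 n z y) (hπt0 z)
  have hsplitT : ∀ n x y, T (n + 1) x y
      = (∑' z, (T 1 x z - πt z) * T n z y) + ∑' z, πt z * T n z y := by
    intro n x y
    rw [hTcomp n x y, ← Summable.tsum_add ?_ (hSsummable n y)]
    · apply tsum_congr fun z => by ring
    · apply Summable.of_nonneg_of_le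
        (fun z => mul_nonneg (hsub0 x z) (hT0 n z y)) (fun z => ?_)
        ((hsub_summable x).mul_right 1)
      exact mul_le_mul_of_nonneg_left (hTle1 n z y) (hsub0 x z)
  have hsubrow : ∀ x, (∑' z, (T 1 x z - πt z)) = 1 - ε := by
    intro x
    rw [Summable.tsum_sub (hTsum 1 x) hπtsummable, hTrow 1 x]
  have hAup : ∀ n y, A (n + 1) y ≤ (1 - ε) * A n y + ∑' z, πt z * T n z y := by
    intro n y
    apply ciSup_le fun x => ?_
    rw [hsplitT n x y]
    have h1 : (∑' z, (T 1 x z - πt z) * T n z y) ≤ (1 - ε) * A n y := by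
      calc (∑' z, (T 1 x z - πt z) * T n z y) ≤ ∑' z, (T 1 x z - πt z) * A n y := by
            apply Summable.tsum_le_tsum _ ?_ ((hsub_summable x).mul_right _)
            · intro z
              exact mul_le_mul_of_nonneg_left (hTleA n z y) (hsub0 x z)
            · apply Summable.of_nonneg_of_le
                (fun z => mul_nonneg (hsub0 x z) (hT0 n z y)) (fun z => ?_)
                ((hsub_summable x).mul_right 1)
              exact mul_le_mul_of_nonneg_left (hTle1 n z y) (hsub0 x z)
        _ = (1 - ε) * A n y := by rw [tsum_mul_right, hsubrow x]
    linarith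
  have hIdown : ∀ n y, (1 - ε) * I n y + (∑' z, πt z * T n z y) ≤ I (n + 1) y := by
    intro n y
    apply le_ciInf fun x => ?_
    rw [hsplitT n x y]
    have h1 : (1 - ε) * I n y ≤ ∑' z, (T 1 x z - πt z) * T n z y := by
      calc (1 - ε) * I n y = ∑' z, (T 1 x z - πt z) * I n y := by
            rw [tsum_mul_right, hsubrow x]
        _ ≤ ∑' z, (T 1 x z - πt z) * T n z y := by
            apply Summable.tsum_le_tsum _ ((hsub_summable x).mul_right _) ?_
            · intro z
              exact mul_le_mul_of_nonneg_left (hIleT n z y) (hsub0 x z)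
            · apply Summable.of_nonneg_of_le
                (fun z => mul_nonneg (hsub0 x z) (hT0 n z y)) (fun z => ?_)
                ((hsub_summable x).mul_right 1)
              exact mul_le_mul_of_nonneg_left (hTle1 n z y) (hsub0 x z)
    linarith
  have hgap : ∀ n y, A (n + 1) y - I (n + 1) y ≤ (1 - ε) * (A n y - I n y) := by
    intro n y
    have h1 := hAup n y
    have h2 := hIdown n y
    have h3 : (1 - ε) * (A n y - I n y)
        = ((1 - ε) * A n y + ∑' z, πt z * T n z y)
          - ((1 - ε) * I n y + ∑' z, πt z * T n z y) := by ring
    linarith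
  have hgapn : ∀ n y, A n y - I n y ≤ (1 - ε) ^ n := by
    intro n
    induction n with
    | zero =>
      intro y
      have h1 := hA1 0 y
      have h2 := hI0 0 y
      simpa using by linarith
    | succ n ih =>
      intro y
      calc A (n + 1) y - I (n + 1) y ≤ (1 - ε) * (A n y - I n y) := hgap n y
        _ ≤ (1 - ε) * (1 - ε) ^ n :=
            mul_le_mul_of_nonneg_left (ih y) (by linarith)
        _ = (1 - ε) ^ (n + 1) := (pow_succ' _ _).symm
  -- the limit ρ
  set ρ : Λ → ℝ := fun y => ⨅ n, A n y with hρdef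
  have hAtend : ∀ y, Tendsto (fun n => A n y) atTop (𝓝 (ρ y)) := by
    intro y
    apply tendsto_atTop_ciInf (hAanti y)
    refine ⟨0, ?_⟩
    rintro v ⟨n, rfl⟩
    exact hA0 n y
  have hgaptend : ∀ y, Tendsto (fun n => A n y - I n y) atTop (𝓝 0) := by
    intro y
    apply tendsto_of_tendsto_of_tendsto_of_le_of_le tendsto_const_nhds
      (tendsto_pow_atTop_nhds_zero_of_lt_one (by linarith) (by linarith))
      (fun n => ?_) (fun n => hgapn n y)
    have h1 := hIleT n x₀ y
    have h2 := hTleA n x₀ y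
    linarith
  have hItend : ∀ y, Tendsto (fun n => I n y) atTop (𝓝 (ρ y)) := by
    intro y
    have h := (hAtend y).sub (hgaptend y)
    rw [sub_zero] at h
    apply h.congr fun n => by ring
  have hTtend : ∀ x y, Tendsto (fun n => T n x y) atTop (𝓝 (ρ y)) := fun x y =>
    tendsto_of_tendsto_of_tendsto_of_le_of_le (hItend y) (hAtend y)
      (fun n => hIleT n x y) (fun n => hTleA n x y)
  have hρpos : ∀ x, 0 < ρ x := by
    intro x
    obtain ⟨m, hm1, hm2⟩ := hirr z₀ x
    have hTm : 0 < T m z₀ x :=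
      div_pos (mul_pos hm2 (hμpos x)) (hRμpos m z₀)
    have hIm : πt z₀ * T m z₀ x ≤ I (m + 1) x := by
      apply le_ciInf fun w => ?_
      rw [hTcomp m w x]
      calc πt z₀ * T m z₀ x ≤ T 1 w z₀ * T m z₀ x :=
          mul_le_mul_of_nonneg_right (hπtle w z₀) (hT0 m z₀ x)
        _ ≤ ∑' z, T 1 w z * T m z x :=
          Summable.le_tsum (hTprodsummable m w x) z₀
            (fun j _ => mul_nonneg (hT0 1 w j) (hT0 m j x))
    have hρge : I (m + 1) x ≤ ρ x := by
      apply ge_of_tendsto (hItend x)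
      filter_upwards [eventually_ge_atTop (m + 1)] with n hn
      exact hImono x hn
    have hπtz₀ : 0 < πt z₀ :=
      div_pos (mul_pos hz₀ (hμpos z₀)) (mul_pos hRpos hC₁pos)
    nlinarith
  have hTxx : ∀ x n, T n x x = matPow P n x x / R ^ n := by
    intro x n
    show matPow P n x x * μ x / (R ^ n * μ x) = _
    have h1 : μ x ≠ 0 := (hμpos x).ne'
    have h2 : (R : ℝ) ^ n ≠ 0 := (pow_pos hRpos n).ne'
    field_simp
  -- assembling the conclusion
  refine ⟨?_, R, hRpos, hRione, ?_, ?_, ν, μ, hνpos, hμpos,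
    (fun y => (hνPsummable y).hasSum_iff.mpr (hνeig y)),
    (fun x => (hPμsummable x).hasSum_iff.mpr (hμeig x)),
    hνsum, 1, C₁, one_pos, hμlb, hμub⟩
  · -- aperiodicity
    intro x d hd
    have hev : ∀ᶠ n in atTop, 0 < T n x x := (hTtend x x) (lt_mem_nhds (hρpos x))
    obtain ⟨N, hN⟩ := eventually_atTop.mp hev
    have hpos : ∀ n, N ≤ n → 0 < matPow P n x x := by
      intro n hn
      have h := hN n hn
      rw [hTxx x n] at h
      have h2 := mul_pos h (pow_pos hRpos n)
      rwa [div_mul_cancel₀ _ (pow_pos hRpos n).ne'] at h2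
    have hd1 : d ∣ N + 1 := hd (N + 1) (by omega) (hpos (N + 1) (by omega))
    have hd2 : d ∣ N + 2 := hd (N + 2) (by omega) (hpos (N + 2) (by omega))
    have hdd : d ∣ (N + 2) - (N + 1) := Nat.dvd_sub hd2 hd1
    rw [show N + 2 - (N + 1) = 1 by omega] at hdd
    exact Nat.dvd_one.mp hdd
  · -- decay parameter
    intro x
    have h1 : Tendsto (fun n : ℕ => (T n x x) ^ ((n : ℝ)⁻¹)) atTop (𝓝 1) :=
      tendsto_rpow_inv_one (fun n => hT0 n x x) (hρpos x) (hTtend x x)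
    have h2 : Tendsto (fun n : ℕ => R * (T n x x) ^ ((n : ℝ)⁻¹)) atTop (𝓝 R) := by
      have h3 := h1.const_mul R
      rwa [mul_one] at h3
    apply h2.congr'
    filter_upwards [eventually_ge_atTop 1] with n hn
    have hmp : matPow P n x x = T n x x * R ^ n := by
      rw [hTxx x n, div_mul_cancel₀ _ (pow_pos hRpos n).ne']
    rw [hmp, Real.mul_rpow (hT0 n x x) (pow_pos hRpos n).le]
    have hRn : ((R : ℝ) ^ n) ^ ((n : ℝ)⁻¹) = R := by
      rw [← Real.rpow_natCast R n, ← Real.rpow_mul hRpos.le,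
        mul_inv_cancel₀ (Nat.cast_ne_zero.mpr (by omega : n ≠ 0)), Real.rpow_one]
    rw [hRn]
    ring
  · -- R-positivity
    intro x
    exact ⟨ρ x, hρpos x, (hTtend x x).congr fun n => hTxx x n⟩
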